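/- Let T be an action set (projection of a non-vertical face of epi(−f)) and define W(T) = ⋂_{t ∈ T} W(t). Then W(T) is nonempty and is a reaction set (the projection of a non-vertical face of epi(g)). -/

import Mathlib

noncomputable section
open Set

abbrev V (n : ℕ) := EuclideanSpace ℝ (Fin n)

/-- A polyhedron: finite intersection of closed half-spaces. -/
def IsPolyhedron {E : Type*} [AddCommGroup E] [Module ℝ E] (P : Set E) : Prop :=
  ∃ (m : ℕ) (L : Fin m → E →ₗ[ℝ] ℝ) (b : Fin m → ℝ), P = {x | ∀ i, L i x ≤ b i}

/-- Epigraph of an `EReal`-valued function (as a subset of `ℝⁿ × ℝ`). -/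
def epiE {n : ℕ} (g : V n → EReal) : Set (V n × ℝ) := {p | g p.1 ≤ (p.2 : EReal)}

/-- `F` is a non-vertical face of `P`: an exposed face, nonempty, whose affine hull
does not contain the vertical direction `(0, 1)`. -/
def NonVerticalFace {n : ℕ} (P F : Set (V n × ℝ)) : Prop :=
  IsExposed ℝ P F ∧ F.Nonempty ∧
    ((0 : V n), (1 : ℝ)) ∉ (affineSpan ℝ F).direction

lemma faceA {E : Type*} [AddCommGroup E] [Module ℝ E] {m : ℕ}
    (L : Fin m → E →ₗ[ℝ] ℝ) (b : Fin m → ℝ) (c : E →ₗ[ℝ] ℝ)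
    {P F : Set E} (hP : P = {x | ∀ i, L i x ≤ b i})
    (hF : F = {x | x ∈ P ∧ ∀ y ∈ P, c x ≤ c y})
    (x₀ : E) (hx₀ : x₀ ∈ F)
    {y : E} (hyP : y ∈ P)
    (hyact : ∀ i, (∀ x ∈ F, L i x = b i) → L i y = b i) :
    y ∈ F := by
  classical
  have hFP : ∀ x ∈ F, x ∈ P := fun x hx => (hF ▸ hx).1
  have hFmin : ∀ x ∈ F, ∀ z ∈ P, c x ≤ c z := fun x hx => (hF ▸ hx).2
  have hPle : ∀ x ∈ P, ∀ i, L i x ≤ b i := by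
    intro x hx i; rw [hP] at hx; exact hx i
  set s : Finset (Fin m) := Finset.univ.filter (fun i => ¬ ∀ x ∈ F, L i x = b i) with hs
  have hex : ∀ i : Fin m, ∃ x, x ∈ F ∧ (i ∈ s → L i x < b i) := by
    intro i
    by_cases hi : i ∈ s
    · have h2 := (Finset.mem_filter.mp hi).2
      push_neg at h2
      obtain ⟨x, hxF, hxne⟩ := h2
      exact ⟨x, hxF, fun _ => lt_of_le_of_ne (hPle x (hFP x hxF) i) hxne⟩
    · exact ⟨x₀, hx₀, fun h => absurd h hi⟩
  choose x_ hxF hxlt using hex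
  set N : ℝ := (s.card + 1 : ℝ) with hNdef
  have hN : 0 < N := by rw [hNdef]; positivity
  set xs : E := N⁻¹ • (x₀ + ∑ i ∈ s, x_ i) with hxs
  have hφ : ∀ φ : E →ₗ[ℝ] ℝ, φ xs = N⁻¹ * (φ x₀ + ∑ i ∈ s, φ (x_ i)) := by
    intro φ; simp [hxs, map_smul, map_add, map_sum, smul_eq_mul, mul_add]
  have hkey : ∀ a B : ℝ, a ≤ N * B → N⁻¹ * a ≤ B := by
    intro a B h
    calc N⁻¹ * a ≤ N⁻¹ * (N * B) :=
          mul_le_mul_of_nonneg_left h (le_of_lt (inv_pos.mpr hN))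
      _ = B := inv_mul_cancel_left₀ (ne_of_gt hN) B
  have hcx₀ : ∀ x ∈ F, c x = c x₀ :=
    fun x hx => le_antisymm (hFmin x hx x₀ (hFP x₀ hx₀)) (hFmin x₀ hx₀ x (hFP x hx))
  have hxsP : xs ∈ P := by
    rw [hP]
    intro j
    rw [hφ]
    apply hkey
    have h1 : L j x₀ ≤ b j := hPle x₀ (hFP x₀ hx₀) j
    have h2 : ∑ i ∈ s, L j (x_ i) ≤ ∑ i ∈ s, b j :=
      Finset.sum_le_sum fun i _ => hPle (x_ i) (hFP _ (hxF i)) j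
    simp only [Finset.sum_const, nsmul_eq_mul] at h2
    rw [hNdef]; nlinarith
  have hxsF : xs ∈ F := by
    rw [hF]
    refine ⟨hxsP, fun z hz => ?_⟩
    have hcxs : c xs = c x₀ := by
      rw [hφ]
      have hsum : ∑ i ∈ s, c (x_ i) = (s.card : ℝ) * c x₀ := by
        rw [Finset.sum_congr rfl fun i _ => hcx₀ (x_ i) (hxF i)]
        simp [Finset.sum_const, nsmul_eq_mul]
      rw [hsum]
      have : c x₀ + (s.card : ℝ) * c x₀ = N * c x₀ := by rw [hNdef]; ring
      rw [this, inv_mul_cancel_left₀ (ne_of_gt hN)]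
    rw [hcxs]
    exact hFmin x₀ hx₀ z hz
  have hstrict : ∀ j ∈ s, L j xs < b j := by
    intro j hj
    rw [hφ]
    have h1 : L j x₀ ≤ b j := hPle x₀ (hFP x₀ hx₀) j
    have h2 : ∑ i ∈ s, L j (x_ i) < ∑ i ∈ s, b j := by
      apply Finset.sum_lt_sum
      · exact fun i _ => hPle (x_ i) (hFP _ (hxF i)) j
      · exact ⟨j, hj, hxlt j hj⟩
    simp only [Finset.sum_const, nsmul_eq_mul] at h2
    have : L j x₀ + ∑ i ∈ s, L j (x_ i) < N * b j := by rw [hNdef]; nlinarith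
    calc N⁻¹ * (L j x₀ + ∑ i ∈ s, L j (x_ i)) < N⁻¹ * (N * b j) :=
          mul_lt_mul_of_pos_left this (inv_pos.mpr hN)
      _ = b j := inv_mul_cancel_left₀ (ne_of_gt hN) (b j)
  set d : E := xs - y with hd
  have hdI : ∀ j, j ∉ s → L j d = 0 := by
    intro j hj
    have hact : ∀ x ∈ F, L j x = b j := by
      by_contra h
      exact hj (Finset.mem_filter.mpr ⟨Finset.mem_univ j, h⟩)
    have h1 : L j xs = b j := hact xs hxsF
    have h2 : L j y = b j := hyact j hact
    simp [hd, map_sub, h1, h2]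
  set tset : Finset ℝ := insert 1 (s.image fun j => (b j - L j xs) / (|L j d| + 1)) with ht
  have htne : tset.Nonempty := ⟨1, Finset.mem_insert_self _ _⟩
  set ε : ℝ := tset.min' htne with hε
  have hε0 : 0 < ε := by
    rw [hε, Finset.lt_min'_iff]
    intro x hx
    rw [ht, Finset.mem_insert] at hx
    rcases hx with rfl | hx
    · norm_num
    · obtain ⟨j, hj, rfl⟩ := Finset.mem_image.mp hx
      have := hstrict j hj
      have habs : (0:ℝ) < |L j d| + 1 := by positivity
      exact div_pos (by linarith) habs
  have hεle : ∀ j ∈ s, ε ≤ (b j - L j xs) / (|L j d| + 1) := by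
    intro j hj
    exact Finset.min'_le _ _ (Finset.mem_insert_of_mem (Finset.mem_image_of_mem _ hj))
  have hzP : xs + ε • d ∈ P := by
    rw [hP]
    intro j
    have hLz : L j (xs + ε • d) = L j xs + ε * L j d := by
      simp [map_add, map_smul, smul_eq_mul]
    rw [hLz]
    by_cases hj : j ∈ s
    · have habs : (0:ℝ) < |L j d| + 1 := by positivity
      have h1 : ε * (|L j d| + 1) ≤ b j - L j xs := by
        have := hεle j hj
        calc ε * (|L j d| + 1) ≤ ((b j - L j xs) / (|L j d| + 1)) * (|L j d| + 1) :=
              mul_le_mul_of_nonneg_right this (le_of_lt habs)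
          _ = b j - L j xs := by field_simp
      have h2 : ε * L j d ≤ ε * (|L j d| + 1) := by
        apply mul_le_mul_of_nonneg_left _ (le_of_lt hε0)
        have := le_abs_self (L j d)
        linarith
      linarith
    · rw [hdI j hj]
      have h1 : L j xs = b j := by
        have hact : ∀ x ∈ F, L j x = b j := by
          by_contra h
          exact hj (Finset.mem_filter.mpr ⟨Finset.mem_univ j, h⟩)
        exact hact xs hxsF
      simp [h1]
  have hcd : 0 ≤ c d := by
    have h1 : c xs ≤ c (xs + ε • d) := hFmin xs hxsF _ hzP
    have h2 : c (xs + ε • d) = c xs + ε * c d := by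
      simp [map_add, map_smul, smul_eq_mul]
    rw [h2] at h1
    nlinarith
  have hcy : c y ≤ c xs := by
    have : c d = c xs - c y := by simp [hd, map_sub]
    linarith [this ▸ hcd]
  rw [hF]
  exact ⟨hyP, fun z hz => le_trans (le_trans hcy (hcx₀ xs hxsF).le)
    ((hcx₀ xs hxsF) ▸ hFmin xs hxsF z hz)⟩

/-- if `T` is an action set (i.e. `T = T(w)` for some `w`),
then `W(T) := ⋂_{t ∈ T} W(t)` is nonempty and is a reaction set. -/
theorem stmt5 (n : ℕ) (g : V n → EReal)
    (hbot : ∀ w, g w ≠ ⊥) (hproper : ∃ w, g w ≠ ⊤)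
    (hpoly : IsPolyhedron (epiE g))
    (f : V n → EReal)
    (hf : ∀ t, f t = ⨅ w : V n, ((inner ℝ t w : ℝ) : EReal) + g w)
    (hatt : ∀ t, ∃ w : V n, f t = ((inner ℝ t w : ℝ) : EReal) + g w)
    (Wt : V n → Set (V n))
    (hW : ∀ t, Wt t = {w | f t = ((inner ℝ t w : ℝ) : EReal) + g w})
    (Tw : V n → Set (V n))
    (hT : ∀ w, Tw w = {t | f t = ((inner ℝ t w : ℝ) : EReal) + g w})
    (T : Set (V n)) (hact : ∃ w : V n, T = Tw w) (hTne : T.Nonempty) :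
    (⋂ t ∈ T, Wt t).Nonempty ∧
      ∃ F : Set (V n × ℝ), NonVerticalFace (epiE g) F ∧
        (⋂ t ∈ T, Wt t) = Prod.fst '' F := by
  classical
  obtain ⟨w₀, hTw⟩ := hact
  obtain ⟨t₁, ht₁⟩ := hTne
  obtain ⟨m, L, b, hLb⟩ := hpoly
  have hmemT : ∀ t ∈ T, f t = ((inner ℝ t w₀ : ℝ) : EReal) + g w₀ := by
    intro t ht
    rw [hTw, hT] at ht
    exact ht
  have hPle : ∀ x ∈ epiE g, ∀ i, L i x ≤ b i := by
    intro x hx i; rw [hLb] at hx; exact hx i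
  -- f is never ⊤
  have hftop : ∀ t, f t ≠ ⊤ := by
    intro t
    obtain ⟨w', hw'⟩ := hproper
    obtain ⟨gw', hgw'⟩ : ∃ r : ℝ, g w' = (r : EReal) :=
      ⟨(g w').toReal, (EReal.coe_toReal hw' (hbot w')).symm⟩
    have hle : f t ≤ ((inner ℝ t w' + gw' : ℝ) : EReal) := by
      rw [hf, EReal.coe_add]
      exact (iInf_le _ w').trans_eq (by rw [hgw'])
    exact (lt_of_le_of_lt hle (EReal.coe_lt_top _)).ne
  -- g w₀ is real
  obtain ⟨gw₀, hgw₀⟩ : ∃ r : ℝ, g w₀ = (r : EReal) := by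
    have h1 := hmemT t₁ ht₁
    refine ⟨(g w₀).toReal, (EReal.coe_toReal ?_ (hbot w₀)).symm⟩
    intro htop
    rw [htop] at h1
    simp at h1
    exact hftop t₁ h1
  set ft : V n → ℝ := fun t => inner ℝ t w₀ + gw₀ with hft
  have hfT : ∀ t ∈ T, f t = ((ft t : ℝ) : EReal) := by
    intro t ht
    rw [hmemT t ht, hgw₀, hft, ← EReal.coe_add]
  -- the linear functional
  set lt : V n → ((V n × ℝ) →ₗ[ℝ] ℝ) := fun t =>
    ((innerSL ℝ t).toLinearMap).comp (LinearMap.fst ℝ (V n) ℝ) + LinearMap.snd ℝ (V n) ℝ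
    with hltdef
  have hlt : ∀ t (x : V n × ℝ), lt t x = inner ℝ t x.1 + x.2 := by
    intro t x; simp [hltdef]
  have hmin : ∀ t, ∀ x ∈ epiE g, f t ≤ ((lt t x : ℝ) : EReal) := by
    intro t x hx
    have h1 : f t ≤ ((inner ℝ t x.1 : ℝ) : EReal) + g x.1 := by
      rw [hf]; exact iInf_le _ x.1
    have h2 : ((inner ℝ t x.1 : ℝ) : EReal) + g x.1 ≤
        ((inner ℝ t x.1 : ℝ) : EReal) + (x.2 : EReal) := add_le_add_right hx _
    rw [hlt, EReal.coe_add]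
    exact h1.trans h2
  -- the faces
  set Fa : V n → Set (V n × ℝ) := fun t =>
    {x | x ∈ epiE g ∧ ∀ y ∈ epiE g, lt t x ≤ lt t y} with hFadef
  set x₀ : V n × ℝ := (w₀, gw₀) with hx₀def
  have hx₀epi : x₀ ∈ epiE g := by
    show g w₀ ≤ ((gw₀ : ℝ) : EReal)
    rw [hgw₀]
  have hltx₀ : ∀ t, lt t x₀ = ft t := by
    intro t; rw [hlt, hft]
  have hx₀Fa : ∀ t ∈ T, x₀ ∈ Fa t := by
    intro t ht
    refine ⟨hx₀epi, fun y hy => ?_⟩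
    rw [hltx₀]
    have := hmin t y hy
    rw [hfT t ht] at this
    exact_mod_cast this
  have hFaof : ∀ t ∈ T, ∀ x, x ∈ epiE g → lt t x = ft t → x ∈ Fa t := by
    intro t ht x hxe heq
    refine ⟨hxe, fun y hy => ?_⟩
    rw [heq]
    have := hmin t y hy
    rw [hfT t ht] at this
    exact_mod_cast this
  have hFaeq : ∀ t ∈ T, ∀ x ∈ Fa t, lt t x = ft t := by
    intro t ht x hx
    refine le_antisymm ((hx.2 x₀ hx₀epi).trans_eq (hltx₀ t)) ?_
    have := hmin t x hx.1
    rw [hfT t ht] at this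
    exact_mod_cast this
  -- the intersection face
  set IS : Set (Fin m) := {i | ∃ t ∈ T, ∀ x ∈ Fa t, L i x = b i} with hIS
  set Ifin : Finset (Fin m) := (Set.toFinite IS).toFinset with hIfin
  set F : Set (V n × ℝ) := {x | x ∈ epiE g ∧ ∀ i ∈ Ifin, L i x = b i} with hFdef
  have hmemIfin : ∀ i, i ∈ Ifin ↔ ∃ t ∈ T, ∀ x ∈ Fa t, L i x = b i := by
    intro i; rw [hIfin, Set.Finite.mem_toFinset]; rfl
  have hFsub : ∀ t ∈ T, ∀ x ∈ F, x ∈ Fa t := by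
    intro t ht x hx
    refine faceA L b (lt t) hLb rfl x₀ (hx₀Fa t ht) hx.1 ?_
    intro i hi
    exact hx.2 i ((hmemIfin i).mpr ⟨t, ht, hi⟩)
  have hx₀F : x₀ ∈ F := by
    refine ⟨hx₀epi, fun i hi => ?_⟩
    obtain ⟨t, ht, hact'⟩ := (hmemIfin i).mp hi
    exact hact' x₀ (hx₀Fa t ht)
  constructor
  · exact ⟨w₀, Set.mem_iInter₂.mpr fun t ht => by rw [hW]; exact hmemT t ht⟩
  refine ⟨F, ⟨?_, ⟨x₀, hx₀F⟩, ?_⟩, ?_⟩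
  · -- exposed
    intro _
    refine ⟨(∑ i ∈ Ifin, L i).toContinuousLinearMap, ?_⟩
    ext x
    simp only [LinearMap.coe_toContinuousLinearMap', LinearMap.coe_sum,
      Finset.sum_apply, Set.mem_setOf_eq]
    constructor
    · intro hx
      refine ⟨hx.1, fun y hy => ?_⟩
      calc ∑ i ∈ Ifin, L i y ≤ ∑ i ∈ Ifin, b i :=
            Finset.sum_le_sum fun i _ => hPle y hy i
        _ = ∑ i ∈ Ifin, L i x :=
            (Finset.sum_congr rfl fun i hi => (hx.2 i hi).symm)
    · rintro ⟨hxe, hmax⟩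
      refine ⟨hxe, fun i hi => ?_⟩
      by_contra hne
      have hlt' : L i x < b i := lt_of_le_of_ne (hPle x hxe i) hne
      have h1 : ∑ j ∈ Ifin, L j x < ∑ j ∈ Ifin, b j :=
        Finset.sum_lt_sum (fun j _ => hPle x hxe j) ⟨i, hi, hlt'⟩
      have h2 : ∑ j ∈ Ifin, b j = ∑ j ∈ Ifin, L j x₀ :=
        Finset.sum_congr rfl fun j hj => (hx₀F.2 j hj).symm
      have h3 := hmax x₀ hx₀epi
      rw [← h2] at h3
      exact absurd h3 (not_le.mpr h1)
  · -- non-vertical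
    intro hmem
    rw [direction_affineSpan] at hmem
    have hker : vectorSpan ℝ F ≤ LinearMap.ker (lt t₁) := by
      rw [vectorSpan_def]
      rw [Submodule.span_le]
      rintro v ⟨x, hx, y, hy, rfl⟩
      have h1 := hFaeq t₁ ht₁ x (hFsub t₁ ht₁ x hx)
      have h2 := hFaeq t₁ ht₁ y (hFsub t₁ ht₁ y hy)
      simp only [SetLike.mem_coe, LinearMap.mem_ker, vsub_eq_sub, map_sub, h1, h2, sub_self]
    have h0 := hker hmem
    rw [LinearMap.mem_ker, hlt] at h0
    simp at h0
  · -- projection equality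
    ext w
    simp only [Set.mem_iInter, Set.mem_image]
    constructor
    · intro hw
      have hw' : ∀ t ∈ T, f t = ((inner ℝ t w : ℝ) : EReal) + g w := by
        intro t ht
        have := hw t
        have h := this ht
        rw [hW] at h
        exact h
      obtain ⟨gw, hgw⟩ : ∃ r : ℝ, g w = (r : EReal) := by
        have h1 := hw' t₁ ht₁
        refine ⟨(g w).toReal, (EReal.coe_toReal ?_ (hbot w)).symm⟩
        intro htop
        rw [htop] at h1
        simp at h1
        exact hftop t₁ h1
      have hepi : (w, gw) ∈ epiE g := by
        show g w ≤ ((gw : ℝ) : EReal)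
        rw [hgw]
      refine ⟨(w, gw), ⟨hepi, fun i hi => ?_⟩, rfl⟩
      obtain ⟨t, ht, hact'⟩ := (hmemIfin i).mp hi
      refine hact' (w, gw) (hFaof t ht _ hepi ?_)
      have : ((lt t (w, gw) : ℝ) : EReal) = ((ft t : ℝ) : EReal) := by
        rw [hlt]
        show ((inner ℝ t w + gw : ℝ) : EReal) = _
        rw [EReal.coe_add, ← hgw, ← hw' t ht, hfT t ht]
      exact_mod_cast this
    · rintro ⟨x, hxF, rfl⟩ t
      intro ht
      have hxFa := hFsub t ht x hxF
      have heq := hFaeq t ht x hxFa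
      rw [hW]
      show f t = ((inner ℝ t x.1 : ℝ) : EReal) + g x.1
      refine le_antisymm (by rw [hf]; exact iInf_le _ x.1) ?_
      have h1 : ((inner ℝ t x.1 : ℝ) : EReal) + g x.1 ≤
          ((inner ℝ t x.1 : ℝ) : EReal) + (x.2 : EReal) := add_le_add_right hxFa.1 _
      have h2 : ((inner ℝ t x.1 : ℝ) : EReal) + (x.2 : EReal) = ((ft t : ℝ) : EReal) := by
        rw [← EReal.coe_add, ← hlt t x, heq]
      rw [hfT t ht]
      exact h1.trans_eq h2
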